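/- The function h(ν) = ψ(ν+3/2) - ψ(ν+2) + 1/(2(ν+1)) is strictly decreasing on (-1, ∞); moreover h(ν) → 0 as ν → ∞, hence h(ν) > 0 for all ν > -1. -/

import Mathlib

open Real Filter

noncomputable def digamma (x : ℝ) : ℝ := deriv (fun y => Real.log (Real.Gamma y)) x

noncomputable def hDigamma (ν : ℝ) : ℝ :=
  digamma (ν + 3 / 2) - digamma (ν + 2) + 1 / (2 * (ν + 1))

open Set Topology

lemma diffAt_logGamma {x : ℝ} (hx : 0 < x) :
    DifferentiableAt ℝ (fun y => Real.log (Real.Gamma y)) x := by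
  have hne : ∀ m : ℕ, x ≠ -m := fun m h => by
    have := Nat.cast_nonneg (α := ℝ) m
    rw [h] at hx; linarith
  exact (Real.differentiableAt_Gamma hne).log (Real.Gamma_ne_zero hne)

lemma digamma_rec {x : ℝ} (hx : 0 < x) : digamma (x + 1) = digamma x + 1 / x := by
  unfold digamma
  rw [← deriv_comp_add_const, one_div, ← Real.deriv_log,
    ← deriv_fun_add (diffAt_logGamma hx) (Real.differentiableAt_log hx.ne')]
  apply Filter.EventuallyEq.deriv_eq
  filter_upwards [eventually_gt_nhds hx] with y hy
  rw [Real.Gamma_add_one hy.ne', Real.log_mul hy.ne' (Real.Gamma_pos_of_pos hy).ne']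
  ring

lemma digamma_add_nat {x : ℝ} (hx : 0 < x) (N : ℕ) :
    digamma (x + N) = digamma x + ∑ m ∈ Finset.range N, 1 / (x + m) := by
  induction N with
  | zero => simp
  | succ n ih =>
    have hxn : (0:ℝ) < x + n := by have := Nat.cast_nonneg (α := ℝ) n; linarith
    have h1 : x + ((n:ℕ)+1 : ℕ) = (x + n) + 1 := by push_cast; ring
    rw [h1, digamma_rec hxn, ih, Finset.sum_range_succ]
    ring

lemma digamma_mono : MonotoneOn digamma (Ioi (0:ℝ)) := by
  have := Real.convexOn_log_Gamma.monotoneOn_deriv (fun x hx => diffAt_logGamma hx)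
  exact this

lemma digamma_diff_tendsto {x y : ℝ} (hx : 0 < x) (hxy : x ≤ y) :
    Tendsto (fun N : ℕ => digamma (y + N) - digamma (x + N)) atTop (nhds 0) := by
  have hy : 0 < y := lt_of_lt_of_le hx hxy
  obtain ⟨k, hk⟩ : ∃ k : ℕ, y ≤ x + k :=
    ⟨⌈y - x⌉₊, by have := Nat.le_ceil (y - x); linarith⟩
  have hxN : ∀ N : ℕ, (0:ℝ) < x + N := fun N => by
    have := Nat.cast_nonneg (α := ℝ) N; linarith
  have hyN : ∀ N : ℕ, (0:ℝ) < y + N := fun N => by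
    have := Nat.cast_nonneg (α := ℝ) N; linarith
  apply squeeze_zero (g := fun N : ℕ => (k:ℝ) * (1 / (x + N)))
  · intro N
    have := digamma_mono (mem_Ioi.mpr (hxN N)) (mem_Ioi.mpr (hyN N)) (by linarith)
    linarith
  · intro N
    have h1 : digamma (y + N) ≤ digamma ((x + N) + k) := by
      apply digamma_mono (mem_Ioi.mpr (hyN N))
      · exact mem_Ioi.mpr (by have := Nat.cast_nonneg (α := ℝ) k; linarith [hxN N])
      · linarith
    have h2 : digamma ((x + N) + k) = digamma (x + N) + ∑ m ∈ Finset.range k, 1 / (x + N + m) :=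
      digamma_add_nat (hxN N) k
    have h3 : ∑ m ∈ Finset.range k, 1 / (x + (N:ℝ) + m) ≤ (k:ℝ) * (1 / (x + N)) := by
      calc ∑ m ∈ Finset.range k, 1 / (x + (N:ℝ) + m)
          ≤ ∑ _m ∈ Finset.range k, 1 / (x + (N:ℝ)) := by
            apply Finset.sum_le_sum
            intro m _
            apply one_div_le_one_div_of_le (hxN N)
            have := Nat.cast_nonneg (α := ℝ) m; linarith
        _ = (k:ℝ) * (1 / (x + N)) := by simp [Finset.sum_const, mul_comm]
    linarith
  · have h0 : Tendsto (fun N : ℕ => x + (N:ℝ)) atTop atTop :=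
      tendsto_atTop_add_const_left _ _ tendsto_natCast_atTop_atTop
    have := h0.inv_tendsto_atTop.const_mul (k:ℝ)
    simpa [one_div] using this

lemma digamma_sub_eq_tendsto {x y : ℝ} (hx : 0 < x) (hxy : x ≤ y) :
    Tendsto (fun N : ℕ => ∑ m ∈ Finset.range N, (1 / (x + m) - 1 / (y + m))) atTop
      (nhds (digamma y - digamma x)) := by
  have hy : 0 < y := lt_of_lt_of_le hx hxy
  have hrep : ∀ N : ℕ, ∑ m ∈ Finset.range N, (1 / (x + m) - 1 / (y + m))
      = (digamma y - digamma x) - (digamma (y + N) - digamma (x + N)) := by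
    intro N
    have h1 := digamma_add_nat hx N
    have h2 := digamma_add_nat hy N
    rw [Finset.sum_sub_distrib]
    linarith
  have := Tendsto.const_sub (digamma y - digamma x) (digamma_diff_tendsto hx hxy)
  rw [sub_zero] at this
  exact this.congr (fun N => (hrep N).symm)

lemma telescope_sum (c : ℝ) (hc : 0 < c) (N : ℕ) :
    ∑ m ∈ Finset.range N, (1 / (2 * (c + m)) - 1 / (2 * (c + m + 1)))
      = 1 / (2 * c) - 1 / (2 * (c + N)) := by
  induction N with
  | zero => simp
  | succ n ih =>
    rw [Finset.sum_range_succ, ih]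
    push_cast
    ring

/-- The term in the series representation of `hDigamma`. -/
noncomputable def hTerm (ν : ℝ) (m : ℕ) : ℝ :=
  (1 / (2 * ((ν + 1) + m)) - 1 / (2 * ((ν + 1) + m + 1)))
    - (1 / ((ν + 3 / 2) + m) - 1 / ((ν + 2) + m))

lemma hTerm_eq {ν : ℝ} (hν : -1 < ν) (m : ℕ) :
    hTerm ν m = 1 / (2 * (ν + 1 + m) * (ν + 1 + m + 1) * (2 * (ν + 1 + m) + 1)) := by
  have hm : (0:ℝ) ≤ m := Nat.cast_nonneg m
  have ht : (0:ℝ) < ν + 1 + m := by linarith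
  unfold hTerm
  rw [show (ν + 3 / 2) + (m:ℝ) = (ν + 1 + ↑m) + 1 / 2 by ring,
    show (ν + 2) + (m:ℝ) = (ν + 1 + ↑m) + 1 by ring,
    show (ν + 1) + (m:ℝ) + 1 = (ν + 1 + ↑m) + 1 by ring,
    show (ν + 1) + (m:ℝ) = ν + 1 + ↑m by ring]
  generalize ν + 1 + (m:ℝ) = t at ht ⊢
  have h1 : t ≠ 0 := ht.ne'
  have h2 : t + 1 / 2 ≠ 0 := by linarith
  have h3 : t + 1 ≠ 0 := by linarith
  have h4 : 2 * t + 1 ≠ 0 := by linarith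
  field_simp
  ring

lemma hTerm_pos {ν : ℝ} (hν : -1 < ν) (m : ℕ) : 0 < hTerm ν m := by
  have hm : (0:ℝ) ≤ m := Nat.cast_nonneg m
  have ht : (0:ℝ) < ν + 1 + m := by linarith
  rw [hTerm_eq hν m]
  positivity

lemma hTerm_anti {ν₁ ν₂ : ℝ} (h1 : -1 < ν₁) (h12 : ν₁ < ν₂) (m : ℕ) :
    hTerm ν₂ m < hTerm ν₁ m := by
  have hm : (0:ℝ) ≤ m := Nat.cast_nonneg m
  have ht1 : (0:ℝ) < ν₁ + 1 + m := by linarith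
  have ht2 : (0:ℝ) < ν₂ + 1 + m := by linarith
  rw [hTerm_eq h1 m, hTerm_eq (by linarith) m]
  apply one_div_lt_one_div_of_lt (by positivity)
  nlinarith [mul_pos ht1 ht2, sq_nonneg (ν₁ + 1 + m), sq_nonneg (ν₂ + 1 + m)]

lemma hDigamma_rep {ν : ℝ} (hν : -1 < ν) :
    Tendsto (fun N : ℕ => ∑ m ∈ Finset.range N, hTerm ν m) atTop (nhds (hDigamma ν)) := by
  have hx : (0:ℝ) < ν + 3 / 2 := by linarith
  have hxy : ν + 3 / 2 ≤ ν + 2 := by linarith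
  have hc : (0:ℝ) < ν + 1 := by linarith
  have hA := digamma_sub_eq_tendsto hx hxy
  have hB : Tendsto (fun N : ℕ => (1 : ℝ) / (2 * ((ν + 1) + N))) atTop (nhds 0) := by
    have h0 : Tendsto (fun N : ℕ => 2 * ((ν + 1) + (N:ℝ))) atTop atTop := by
      apply Tendsto.const_mul_atTop two_pos
      exact tendsto_atTop_add_const_left _ _ tendsto_natCast_atTop_atTop
    refine Tendsto.congr (fun N => ?_) h0.inv_tendsto_atTop
    simp [Pi.inv_apply, one_div]
  have hBsum : Tendsto (fun N : ℕ =>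
      ∑ m ∈ Finset.range N, (1 / (2 * ((ν + 1) + m)) - 1 / (2 * ((ν + 1) + m + 1)))) atTop
      (nhds (1 / (2 * (ν + 1)))) := by
    have := Tendsto.const_sub (1 / (2 * (ν + 1))) hB
    rw [sub_zero] at this
    exact this.congr (fun N => (telescope_sum (ν + 1) hc N).symm)
  have hcomb := hBsum.sub hA
  have : (1 / (2 * (ν + 1))) - (digamma (ν + 2) - digamma (ν + 3 / 2)) = hDigamma ν := by
    unfold hDigamma; ring
  rw [this] at hcomb
  refine hcomb.congr (fun N => ?_)
  rw [← Finset.sum_sub_distrib]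
  rfl

lemma hDigamma_pos {ν : ℝ} (hν : -1 < ν) : 0 < hDigamma ν := by
  have h := hDigamma_rep hν
  have hle : hTerm ν 0 ≤ hDigamma ν := by
    apply ge_of_tendsto h
    filter_upwards [eventually_ge_atTop 1] with N hN
    have : ∑ m ∈ Finset.range 1, hTerm ν m ≤ ∑ m ∈ Finset.range N, hTerm ν m := by
      apply Finset.sum_le_sum_of_subset_of_nonneg
      · exact Finset.range_subset_range.mpr hN
      · intro m _ _; exact (hTerm_pos hν m).le
    simpa using this
  linarith [hTerm_pos hν 0]

lemma hDigamma_le {ν : ℝ} (hν : -1 < ν) : hDigamma ν ≤ 1 / (4 * (ν + 1) ^ 2) := by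
  have hc : (0:ℝ) < ν + 1 := by linarith
  apply le_of_tendsto (hDigamma_rep hν)
  filter_upwards with N
  have hterm_le : ∀ m : ℕ, hTerm ν m ≤
      (1 / (2 * ((ν + 1) + m)) - 1 / (2 * ((ν + 1) + m + 1))) * (1 / (2 * (ν + 1))) := by
    intro m
    have hm : (0:ℝ) ≤ m := Nat.cast_nonneg m
    have ht : (0:ℝ) < ν + 1 + m := by linarith
    rw [hTerm_eq hν m]
    have hsplit : 1 / (2 * ((ν + 1) + (m:ℝ))) - 1 / (2 * ((ν + 1) + m + 1))
        = 1 / (2 * (ν + 1 + m) * (ν + 1 + m + 1)) := by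
      rw [show (ν + 1) + (m:ℝ) + 1 = (ν + 1 + ↑m) + 1 by ring,
        show (ν + 1) + (m:ℝ) = ν + 1 + ↑m by ring]
      generalize ν + 1 + (m:ℝ) = t at ht ⊢
      have h1 : t ≠ 0 := ht.ne'
      have h3 : t + 1 ≠ 0 := by linarith
      field_simp
      ring
    rw [hsplit]
    rw [div_mul_div_comm, one_mul]
    apply one_div_le_one_div_of_le (by positivity)
    have hp : (0:ℝ) < 2 * (ν + 1 + ↑m) * (ν + 1 + ↑m + 1) := by positivity
    nlinarith [mul_le_mul_of_nonneg_left
      (show 2 * (ν + 1) ≤ 2 * (ν + 1 + (m:ℝ)) + 1 by linarith) hp.le]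
  calc ∑ m ∈ Finset.range N, hTerm ν m
      ≤ ∑ m ∈ Finset.range N,
        (1 / (2 * ((ν + 1) + m)) - 1 / (2 * ((ν + 1) + m + 1))) * (1 / (2 * (ν + 1))) :=
        Finset.sum_le_sum (fun m _ => hterm_le m)
    _ = (1 / (2 * (ν + 1)) - 1 / (2 * ((ν + 1) + N))) * (1 / (2 * (ν + 1))) := by
        rw [← Finset.sum_mul, telescope_sum (ν + 1) hc N]
    _ ≤ (1 / (2 * (ν + 1))) * (1 / (2 * (ν + 1))) := by
        have hN : (0:ℝ) ≤ N := Nat.cast_nonneg N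
        have : (0:ℝ) < 2 * ((ν + 1) + N) := by linarith
        have h0 : (0:ℝ) ≤ 1 / (2 * ((ν + 1) + N)) := by positivity
        apply mul_le_mul_of_nonneg_right (by linarith) (by positivity)
    _ = 1 / (4 * (ν + 1) ^ 2) := by field_simp; ring

theorem hDigamma_strictAnti_tendsto_pos :
    StrictAntiOn hDigamma (Set.Ioi (-1 : ℝ)) ∧
    Tendsto hDigamma atTop (nhds 0) ∧
    ∀ ν : ℝ, -1 < ν → 0 < hDigamma ν := by
  refine ⟨?_, ?_, fun ν hν => hDigamma_pos hν⟩
  · intro ν₁ h1 ν₂ h2 h12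
    rw [Set.mem_Ioi] at h1 h2
    have key : Tendsto (fun N : ℕ =>
        (∑ m ∈ Finset.range N, hTerm ν₁ m) - ∑ m ∈ Finset.range N, hTerm ν₂ m) atTop
        (nhds (hDigamma ν₁ - hDigamma ν₂)) := (hDigamma_rep h1).sub (hDigamma_rep h2)
    have hd : 0 < hTerm ν₁ 0 - hTerm ν₂ 0 := by linarith [hTerm_anti h1 h12 0]
    have hge : hTerm ν₁ 0 - hTerm ν₂ 0 ≤ hDigamma ν₁ - hDigamma ν₂ := by
      apply ge_of_tendsto key
      filter_upwards [eventually_ge_atTop 1] with N hN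
      rw [← Finset.sum_sub_distrib]
      have : ∑ m ∈ Finset.range 1, (hTerm ν₁ m - hTerm ν₂ m)
          ≤ ∑ m ∈ Finset.range N, (hTerm ν₁ m - hTerm ν₂ m) := by
        apply Finset.sum_le_sum_of_subset_of_nonneg
        · exact Finset.range_subset_range.mpr hN
        · intro m _ _; linarith [hTerm_anti h1 h12 m]
      simpa using this
    linarith
  · have hbound : Tendsto (fun ν : ℝ => 1 / (4 * (ν + 1) ^ 2)) atTop (nhds 0) := by
      have h0 : Tendsto (fun ν : ℝ => 4 * (ν + 1) ^ 2) atTop atTop := by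
        apply Tendsto.const_mul_atTop (by norm_num : (0:ℝ) < 4)
        exact (tendsto_pow_atTop two_ne_zero).comp
          (tendsto_atTop_add_const_right _ _ tendsto_id)
      refine Tendsto.congr (fun ν => ?_) h0.inv_tendsto_atTop
      simp [Pi.inv_apply, one_div]
    apply tendsto_of_tendsto_of_tendsto_of_le_of_le' tendsto_const_nhds hbound
    · filter_upwards [eventually_gt_atTop (-1 : ℝ)] with ν hν
      exact (hDigamma_pos hν).le
    · filter_upwards [eventually_gt_atTop (-1 : ℝ)] with ν hν
      exact hDigamma_le hν
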